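/- The class RTN1* is closed under multiplication by positive integers and under Cauchy product: if A(x), B(x) ∈ RTN1* and k is a positive integer, then k·A(x) ∈ RTN1* and A(x)·B(x) ∈ RTN1*. -/

import Mathlib

open Filter Finset

noncomputable section

/-- `R ∈ RT1`: coefficients eventually positive and `r(n-1)/r(n) → 1`. -/
def RT1 (r : ℕ → ℝ) : Prop :=
  (∀ᶠ n in Filter.atTop, 0 < r n) ∧
    Filter.Tendsto (fun n => r (n - 1) / r n) Filter.atTop (nhds 1)

/-- The coefficients are all natural numbers. -/
def IsNatSeries (r : ℕ → ℝ) : Prop := ∀ n, ∃ k : ℕ, r n = (k : ℝ)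

/-- Members of `RT1` with natural-number coefficients. -/
def RTN1 (r : ℕ → ℝ) : Prop := RT1 r ∧ IsNatSeries r

/-- Coefficient sequence of `R(x^d)`. -/
def substPow (d : ℕ) (r : ℕ → ℝ) : ℕ → ℝ := fun n => if d ∣ n then r (n / d) else 0

/-- Cauchy product of coefficient sequences. -/
def cauchy (a b : ℕ → ℝ) : ℕ → ℝ := fun n => ∑ j ∈ Finset.range (n + 1), a j * b (n - j)

/-- `RTN1* = ⋃_{d ≥ 1} { R(x^d) : R ∈ RTN1 }`. -/
def RTN1star (a : ℕ → ℝ) : Prop := ∃ d : ℕ, 1 ≤ d ∧ ∃ r : ℕ → ℝ, RTN1 r ∧ a = substPow d r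

namespace RTNaux

lemma isNat_nonneg {r : ℕ → ℝ} (h : IsNatSeries r) (n : ℕ) : 0 ≤ r n := by
  obtain ⟨k, hk⟩ := h n; rw [hk]; positivity

lemma substPow_nonneg {r : ℕ → ℝ} (h : ∀ n, 0 ≤ r n) (d n : ℕ) : 0 ≤ substPow d r n := by
  unfold substPow; split
  · exact h _
  · exact le_refl 0

lemma cauchy_nonneg {a b : ℕ → ℝ} (ha : ∀ n, 0 ≤ a n) (hb : ∀ n, 0 ≤ b n) (n : ℕ) :
    0 ≤ cauchy a b n :=
  Finset.sum_nonneg fun j _ => mul_nonneg (ha j) (hb (n - j))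

lemma isNat_substPow {r : ℕ → ℝ} (h : IsNatSeries r) (d : ℕ) : IsNatSeries (substPow d r) := by
  intro n
  unfold substPow
  split
  · exact h _
  · exact ⟨0, by simp⟩

lemma isNat_cauchy {a b : ℕ → ℝ} (ha : IsNatSeries a) (hb : IsNatSeries b) :
    IsNatSeries (cauchy a b) := by
  intro n
  choose A hA using ha
  choose B hB using hb
  refine ⟨∑ j ∈ Finset.range (n + 1), A j * B (n - j), ?_⟩
  unfold cauchy
  push_cast
  exact Finset.sum_congr rfl fun j _ => by rw [hA, hB]

lemma cauchy_comm (a b : ℕ → ℝ) : cauchy a b = cauchy b a := by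
  funext n
  unfold cauchy
  rw [← Finset.sum_range_reflect]
  refine Finset.sum_congr rfl fun j hj => ?_
  simp only [Finset.mem_range] at hj
  have h1 : n + 1 - 1 - j = n - j := by omega
  have h2 : n - (n - j) = j := by omega
  rw [h1, h2, mul_comm]

lemma substPow_one (r : ℕ → ℝ) : substPow 1 r = r := by
  funext n; simp [substPow]

lemma substPow_substPow (r : ℕ → ℝ) {g p : ℕ} (hg : 1 ≤ g) (hp : 1 ≤ p) :
    substPow g (substPow p r) = substPow (g * p) r := by
  funext n
  simp only [substPow]
  by_cases h1 : g ∣ n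
  · obtain ⟨m, rfl⟩ := h1
    have hm : g * m / g = m := by exact Nat.mul_div_cancel_left _ hg
    simp only [dvd_mul_right, if_true, hm]
    by_cases h2 : p ∣ m
    · obtain ⟨m', rfl⟩ := h2
      have : g * p ∣ g * (p * m') := ⟨m', by ring⟩
      rw [if_pos ⟨m', by ring⟩, if_pos this]
      congr 1
      rw [Nat.mul_div_cancel_left _ hp, mul_comm p m', ← Nat.div_div_eq_div_mul]
      rw [Nat.mul_div_cancel_left _ hg, Nat.mul_div_cancel _ hp]
    · rw [if_neg h2, if_neg]
      rintro ⟨m', hm'⟩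
      exact h2 ⟨m', by
        have heq : g * m = g * (p * m') := by rw [hm']; ring
        exact Nat.eq_of_mul_eq_mul_left hg heq⟩
  · rw [if_neg h1, if_neg]
    intro h
    exact h1 (dvd_trans (Dvd.intro p rfl) h)

end RTNaux
namespace RTNaux

lemma sum_substPow_support {g : ℕ} (hg : 1 ≤ g) (f : ℕ → ℝ)
    (hf : ∀ j, ¬ g ∣ j → f j = 0) (m : ℕ) :
    ∑ j ∈ Finset.range (g * m + 1), f j = ∑ i ∈ Finset.range (m + 1), f (g * i) := by
  rw [← Finset.sum_image (g := fun i => g * i)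
      (s := Finset.range (m+1)) (f := f) (fun x _ y _ h => by
        exact Nat.eq_of_mul_eq_mul_left hg h)]
  refine (Finset.sum_subset ?_ ?_).symm
  · intro j hj
    simp only [Finset.mem_image, Finset.mem_range] at hj ⊢
    obtain ⟨i, hi, rfl⟩ := hj
    have : g * i ≤ g * m := Nat.mul_le_mul (le_refl g) (by omega)
    omega
  · intro j hjr hj
    apply hf
    rintro ⟨i, rfl⟩
    simp only [Finset.mem_image, Finset.mem_range] at hj hjr
    have hi : i < m + 1 := by
      have h1 : g * i ≤ g * m := by omega
      have := Nat.le_of_mul_le_mul_left h1 hg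
      omega
    exact absurd ⟨i, hi, rfl⟩ hj

lemma cauchy_substPow {g : ℕ} (hg : 1 ≤ g) (x y : ℕ → ℝ) :
    cauchy (substPow g x) (substPow g y) = substPow g (cauchy x y) := by
  funext n
  by_cases h : g ∣ n
  · obtain ⟨m, rfl⟩ := h
    have hm : g * m / g = m := Nat.mul_div_cancel_left _ hg
    rw [show substPow g (cauchy x y) (g * m) = cauchy x y m by
      simp [substPow, hm]]
    unfold cauchy
    rw [sum_substPow_support hg _ (fun j hj => by
      simp only [substPow]
      rw [if_neg hj, zero_mul]) m]
    refine Finset.sum_congr rfl fun i hi => ?_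
    simp only [Finset.mem_range] at hi
    have hile : i ≤ m := Nat.lt_succ_iff.mp hi
    have hsub : g * m - g * i = g * (m - i) := by
      have h1 : g * (m - i) + g * i = g * m := by
        rw [← Nat.mul_add]; congr 1; omega
      omega
    simp only [substPow, hsub, dvd_mul_right, if_true, Nat.mul_div_cancel_left _ hg]
  · rw [show substPow g (cauchy x y) n = 0 by simp [substPow, h]]
    unfold cauchy
    apply Finset.sum_eq_zero
    intro j hj
    simp only [Finset.mem_range] at hj
    by_cases hj1 : g ∣ j
    · have hj2 : ¬ g ∣ (n - j) := by
        intro hd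
        exact h (by
          have := Nat.dvd_add hj1 hd
          rwa [Nat.add_sub_cancel' (Nat.lt_succ_iff.mp hj)] at this)
      simp [substPow, hj2]
    · simp [substPow, hj1]

lemma smul_substPow (k : ℝ) (d : ℕ) (r : ℕ → ℝ) :
    (fun n => k * substPow d r n) = substPow d (fun n => k * r n) := by
  funext n
  simp only [substPow]
  split <;> simp

lemma RTN1_smul {r : ℕ → ℝ} (h : RTN1 r) {k : ℕ} (hk : 1 ≤ k) :
    RTN1 (fun n => (k : ℝ) * r n) := by
  obtain ⟨⟨hpos, hrat⟩, hnat⟩ := h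
  have hk0 : (0:ℝ) < k := by exact_mod_cast hk
  refine ⟨⟨?_, ?_⟩, ?_⟩
  · filter_upwards [hpos] with n hn
    positivity
  · have : (fun n => (k:ℝ) * r (n-1) / ((k:ℝ) * r n)) = fun n => r (n-1) / r n := by
      funext n
      rw [mul_div_mul_left _ _ (ne_of_gt hk0)]
    simpa [this] using hrat
  · intro n
    obtain ⟨m, hm⟩ := hnat n
    refine ⟨k * m, ?_⟩
    show (k:ℝ) * r n = _
    rw [hm]; push_cast; ring

lemma pos_threshold {r : ℕ → ℝ} (h : RTN1 r) : ∃ N, ∀ n, N ≤ n → 1 ≤ r n := by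
  obtain ⟨⟨hpos, _⟩, hnat⟩ := h
  obtain ⟨N, hN⟩ := Filter.eventually_atTop.mp hpos
  refine ⟨N, fun n hn => ?_⟩
  obtain ⟨m, hm⟩ := hnat n
  have := hN n hn
  rw [hm] at this ⊢
  exact_mod_cast this

lemma ratio_thresh {r : ℕ → ℝ} (h : RTN1 r) {δ : ℝ} (hδ : 0 < δ) :
    ∃ N, ∀ n, N ≤ n → 0 < r n ∧ (1 - δ) * r (n + 1) ≤ r n ∧ r n ≤ (1 + δ) * r (n + 1) := by
  obtain ⟨⟨hpos, hrat⟩, _⟩ := h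
  have h1 : ∀ᶠ n in atTop, |r (n - 1) / r n - 1| < δ := by
    have := Metric.tendsto_nhds.mp hrat δ hδ
    simpa [Real.dist_eq] using this
  obtain ⟨N1, hN1⟩ := Filter.eventually_atTop.mp h1
  obtain ⟨N2, hN2⟩ := Filter.eventually_atTop.mp hpos
  refine ⟨N1 + N2 + 1, fun n hn => ?_⟩
  have hp1 : 0 < r n := hN2 n (by omega)
  have hp2 : 0 < r (n + 1) := hN2 (n + 1) (by omega)
  have hb := hN1 (n + 1) (by omega)
  simp only [Nat.add_sub_cancel] at hb
  rw [abs_lt] at hb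
  have hu : r n < (1 + δ) * r (n+1) := by
    rw [← div_lt_iff₀ hp2] at *
    linarith [hb.2]
  have hl : (1 - δ) * r (n+1) < r n := by
    rw [← lt_div_iff₀ hp2]
    linarith [hb.1]
  exact ⟨hp1, le_of_lt hl, le_of_lt hu⟩

end RTNaux
namespace RTNaux

lemma chain_lower {s : ℕ → ℝ} {δ : ℝ} (hδ1 : δ < 1) {N : ℕ}
    (hN : ∀ n, N ≤ n → 0 < s n ∧ (1 - δ) * s (n + 1) ≤ s n ∧ s n ≤ (1 + δ) * s (n + 1)) :
    ∀ m k, N ≤ k → (1 - δ) ^ m * s (k + m) ≤ s k := by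
  intro m
  induction m with
  | zero => intro k _; simp
  | succ m ih =>
    intro k hk
    have h1 : (1 - δ) * s ((k + m) + 1) ≤ s (k + m) := (hN (k + m) (by omega)).2.1
    have h2 : (0:ℝ) ≤ (1 - δ) ^ m := pow_nonneg (by linarith) m
    calc (1 - δ) ^ (m + 1) * s (k + (m + 1))
        = (1 - δ) ^ m * ((1 - δ) * s ((k + m) + 1)) := by
          rw [pow_succ]; ring_nf
      _ ≤ (1 - δ) ^ m * s (k + m) := mul_le_mul_of_nonneg_left h1 h2
      _ ≤ s k := ih k hk

lemma bezout_nat {p q : ℕ} (hp : 1 ≤ p) (hq : 1 ≤ q) (hpq : Nat.Coprime p q) :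
    ∃ u v : ℕ, p * u = q * v + 1 := by
  have hb : (1 : ℤ) = p * Nat.gcdA p q + q * Nat.gcdB p q := by
    have := Nat.gcd_eq_gcd_ab p q
    rw [hpq] at this
    exact_mod_cast this
  set x := Nat.gcdA p q
  set y := Nat.gcdB p q
  set t : ℕ := x.natAbs + y.natAbs + 1 with ht
  have hq' : (1:ℤ) ≤ (q:ℤ) := by exact_mod_cast hq
  have hp' : (1:ℤ) ≤ (p:ℤ) := by exact_mod_cast hp
  have habsx : -(x.natAbs : ℤ) ≤ x := by
    rw [← Int.abs_eq_natAbs]; exact neg_abs_le x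
  have habsy : y ≤ (y.natAbs : ℤ) := by
    rw [← Int.abs_eq_natAbs]; exact le_abs_self y
  have htq : (x.natAbs : ℤ) + 1 ≤ (t:ℤ) * q := by
    push_cast [ht]
    have h0 : (0:ℤ) ≤ |x| + |y| + 1 := by positivity
    nlinarith [mul_le_mul_of_nonneg_left hq' h0, abs_nonneg x, abs_nonneg y]
  have hpt : (y.natAbs : ℤ) + 1 ≤ (p:ℤ) * t := by
    push_cast [ht]
    have h0 : (0:ℤ) ≤ |x| + |y| + 1 := by positivity
    nlinarith [mul_le_mul_of_nonneg_left hp' h0, abs_nonneg x, abs_nonneg y]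
  set u' : ℤ := x + t * q with hu'
  set v' : ℤ := p * t - y with hv'
  have hu0 : 0 ≤ u' := by rw [hu']; linarith
  have hv0 : 0 ≤ v' := by rw [hv']; linarith
  have key : (p:ℤ) * u' = q * v' + 1 := by
    rw [hu', hv']; linear_combination -hb
  refine ⟨u'.toNat, v'.toNat, ?_⟩
  zify
  rw [Int.toNat_of_nonneg hu0, Int.toNat_of_nonneg hv0]
  exact key

lemma exists_rep {p q : ℕ} (hp : 1 ≤ p) (hq : 1 ≤ q) (hpq : Nat.Coprime p q)
    (Nr Ns : ℕ) :
    ∀ n, p * Nr + q * Ns + p * q ≤ n → ∃ i k, Nr ≤ i ∧ Ns ≤ k ∧ p * i + q * k = n := by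
  intro n hn
  obtain ⟨u, v, huv⟩ := bezout_nat hp hq hpq
  set m := n - p * Nr - q * Ns with hm
  have hmpq : p * q ≤ m := by omega
  set x := (m * u) % q with hx
  have hxq : x < q := Nat.mod_lt _ (by omega)
  have hpx : p * x ≤ m := by
    have : p * x ≤ p * (q - 1) := Nat.mul_le_mul (le_refl p) (by omega)
    have h2 : p * (q - 1) + p = p * q := by
      rw [← Nat.mul_succ]; congr 1; omega
    omega
  have hmod : p * x ≡ m [MOD q] := by
    calc p * x ≡ p * (m * u) [MOD q] :=
          Nat.ModEq.mul_left p (Nat.mod_modEq (m * u) q)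
      _ = q * (m * v) + m := by
          calc p * (m * u) = m * (p * u) := by ring
            _ = m * (q * v + 1) := by rw [huv]
            _ = q * (m * v) + m := by ring
      _ ≡ 0 + m [MOD q] := Nat.ModEq.add_right m ((Nat.modEq_zero_iff_dvd).mpr ⟨m * v, rfl⟩)
      _ = m := by omega
  have hdvd : q ∣ m - p * x := by
    have h1 : ((q:ℤ)) ∣ (m : ℤ) - (p * x : ℕ) := hmod.dvd
    have h2 : ((m : ℤ) - ((p * x : ℕ) : ℤ)) = ((m - p * x : ℕ) : ℤ) := by
      rw [Nat.cast_sub hpx]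
    rw [h2] at h1
    exact_mod_cast h1
  obtain ⟨y, hy⟩ := hdvd
  refine ⟨Nr + x, Ns + y, by omega, by omega, ?_⟩
  have : p * x + q * y = m := by omega
  calc p * (Nr + x) + q * (Ns + y) = p * Nr + q * Ns + (p * x + q * y) := by ring
    _ = n := by omega

lemma single_term_le {r s : ℕ → ℝ} (hr0 : ∀ n, 0 ≤ r n) (hs0 : ∀ n, 0 ≤ s n)
    {p q : ℕ} (hp : 1 ≤ p) (hq : 1 ≤ q) {i k n : ℕ} (h : p * i + q * k = n) :
    r i * s k ≤ cauchy (substPow p r) (substPow q s) n := by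
  have ha := substPow_nonneg hr0 p
  have hb := substPow_nonneg hs0 q
  have hmem : p * i ∈ Finset.range (n + 1) := Finset.mem_range.mpr (by omega)
  have hval : substPow p r (p * i) * substPow q s (n - p * i) = r i * s k := by
    have h1 : substPow p r (p * i) = r i := by
      simp [substPow, Nat.mul_div_cancel_left _ hp]
    have h2 : n - p * i = q * k := by omega
    have h3 : substPow q s (q * k) = s k := by
      simp [substPow, Nat.mul_div_cancel_left _ hq]
    rw [h1, h2, h3]
  calc r i * s k = _ := hval.symm
    _ ≤ ∑ j ∈ Finset.range (n + 1), substPow p r j * substPow q s (n - j) :=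
      Finset.single_le_sum (fun j _ => mul_nonneg (ha j) (hb (n - j))) hmem

lemma window_le {r s : ℕ → ℝ} (hr0 : ∀ n, 0 ≤ r n) (hs0 : ∀ n, 0 ≤ s n)
    {p q : ℕ} (hp : 1 ≤ p) (hq : 1 ≤ q) {i₀ k₀ n : ℕ} (L : ℕ)
    (h : p * i₀ + q * k₀ = n) (hL : p * L ≤ k₀) :
    ∑ Δ ∈ Finset.range L, r (i₀ + q * Δ) * s (k₀ - p * Δ) ≤
      cauchy (substPow p r) (substPow q s) n := by
  have ha := substPow_nonneg hr0 p
  have hb := substPow_nonneg hs0 q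
  set f : ℕ → ℝ := fun j => substPow p r j * substPow q s (n - j) with hf
  have hval : ∀ Δ, Δ < L → f (p * (i₀ + q * Δ)) = r (i₀ + q * Δ) * s (k₀ - p * Δ) := by
    intro Δ hΔ
    have hpΔ : p * Δ ≤ k₀ := le_trans (Nat.mul_le_mul (le_refl p) (by omega)) hL
    have h1 : substPow p r (p * (i₀ + q * Δ)) = r (i₀ + q * Δ) := by
      simp [substPow, Nat.mul_div_cancel_left _ hp]
    have hq1 : q * (k₀ - p * Δ) + q * (p * Δ) = q * k₀ := by
      rw [← Nat.mul_add]; congr 1; omega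
    have h2 : n - p * (i₀ + q * Δ) = q * (k₀ - p * Δ) := by
      have : p * (i₀ + q * Δ) = p * i₀ + q * (p * Δ) := by ring
      omega
    have h3 : substPow q s (q * (k₀ - p * Δ)) = s (k₀ - p * Δ) := by
      simp [substPow, Nat.mul_div_cancel_left _ hq]
    rw [hf]
    simp only
    rw [h1, h2, h3]
  have hinj : ∀ x ∈ Finset.range L, ∀ y ∈ Finset.range L,
      p * (i₀ + q * x) = p * (i₀ + q * y) → x = y := by
    intro x _ y _ hxy
    have h1 := Nat.eq_of_mul_eq_mul_left hp hxy
    have h2 : q * x = q * y := by omega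
    exact Nat.eq_of_mul_eq_mul_left hq h2
  calc ∑ Δ ∈ Finset.range L, r (i₀ + q * Δ) * s (k₀ - p * Δ)
      = ∑ Δ ∈ Finset.range L, f (p * (i₀ + q * Δ)) := by
        refine Finset.sum_congr rfl fun Δ hΔ => ?_
        rw [hval Δ (Finset.mem_range.mp hΔ)]
    _ = ∑ j ∈ Finset.image (fun Δ => p * (i₀ + q * Δ)) (Finset.range L), f j :=
        (Finset.sum_image hinj).symm
    _ ≤ ∑ j ∈ Finset.range (n + 1), f j := by
        refine Finset.sum_le_sum_of_subset_of_nonneg ?_ fun j _ _ => mul_nonneg (ha j) (hb _)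
        intro j hj
        simp only [Finset.mem_image, Finset.mem_range] at hj ⊢
        obtain ⟨Δ, hΔ, rfl⟩ := hj
        have hpΔ : p * Δ ≤ k₀ := le_trans (Nat.mul_le_mul (le_refl p) (by omega)) hL
        have : p * (i₀ + q * Δ) = p * i₀ + q * (p * Δ) := by ring
        have : q * (p * Δ) ≤ q * k₀ := Nat.mul_le_mul (le_refl q) hpΔ
        omega
    _ = cauchy (substPow p r) (substPow q s) n := rfl

lemma shift_decomp {a b : ℕ → ℝ} {p : ℕ} (hp : 1 ≤ p)
    (ha : ∀ j, ¬ p ∣ j → a j = 0) (n : ℕ) :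
    cauchy a b (n + p) = a 0 * b (n + p) + cauchy (fun j => a (j + p)) b n := by
  unfold cauchy
  have hrange : n + p + 1 = p + (n + 1) := by omega
  rw [hrange, Finset.sum_range_add]
  congr 1
  · rw [Finset.sum_eq_single_of_mem 0 (Finset.mem_range.mpr (by omega))]
    · simp
    · intro j hj hj0
      rw [ha j, zero_mul]
      intro hd
      have := Nat.le_of_dvd (by omega) hd
      simp only [Finset.mem_range] at hj
      omega
  · refine Finset.sum_congr rfl fun j hj => ?_
    simp only [Finset.mem_range] at hj
    have h1 : n + p - (p + j) = n - j := by omega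
    have h2 : p + j = j + p := by omega
    rw [h1, h2]

lemma substPow_shift {r : ℕ → ℝ} {p : ℕ} (hp : 1 ≤ p) :
    (fun j => substPow p r (j + p)) = substPow p (fun i => r (i + 1)) := by
  funext j
  simp only [substPow]
  by_cases h : p ∣ j
  · rw [if_pos (Nat.dvd_add_self_right.mpr h), if_pos h, Nat.add_div_right _ (by omega)]
  · rw [if_neg (fun hd => h (Nat.dvd_add_self_right.mp hd)), if_neg h]

end RTNaux
namespace RTNaux

lemma c_pos {r s : ℕ → ℝ} (hr : RTN1 r) (hs : RTN1 s)
    {p q : ℕ} (hp : 1 ≤ p) (hq : 1 ≤ q) (hpq : Nat.Coprime p q) :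
    ∃ M, ∀ n, M ≤ n → 1 ≤ cauchy (substPow p r) (substPow q s) n := by
  obtain ⟨Nr, hNr⟩ := pos_threshold hr
  obtain ⟨Ns, hNs⟩ := pos_threshold hs
  refine ⟨p * Nr + q * Ns + p * q, fun n hn => ?_⟩
  obtain ⟨i, k, hi, hk, hik⟩ := exists_rep hp hq hpq Nr Ns n hn
  have h1 : (1:ℝ) ≤ r i * s k := by
    have := hNr i hi
    have := hNs k hk
    nlinarith
  exact le_trans h1 (single_term_le (isNat_nonneg hr.2) (isNat_nonneg hs.2) hp hq hik)

/-- Boundary terms with small first index are eventually an `ε`-fraction of the whole sum. -/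
lemma boundary_small {r s : ℕ → ℝ} (hr : RTN1 r) (hs : RTN1 s)
    {p q : ℕ} (hp : 1 ≤ p) (hq : 1 ≤ q)
    (C : ℝ) (N₁ : ℕ) {ε : ℝ} (hε : 0 < ε) :
    ∃ M, ∀ n, M ≤ n → ∀ i k, i < N₁ → p * i + q * k = n →
      C * s k ≤ ε * cauchy (substPow p r) (substPow q s) n := by
  have hr0 := isNat_nonneg hr.2
  have hs0 := isNat_nonneg hs.2
  obtain ⟨Nr, hNr⟩ := pos_threshold hr
  -- window length
  set L : ℕ := ⌈(2 * max C 0) / ε⌉₊ + 1 with hL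
  have hL1 : 1 ≤ L := by omega
  have hCL : 2 * max C 0 ≤ ε * L := by
    have h1 : (2 * max C 0) / ε ≤ (L:ℝ) := by
      have := Nat.le_ceil ((2 * max C 0) / ε)
      have h2 : ((⌈(2 * max C 0) / ε⌉₊ : ℝ)) ≤ (L:ℝ) := by
        rw [hL]; push_cast; linarith
      linarith
    calc 2 * max C 0 = ((2 * max C 0) / ε) * ε := by field_simp
      _ ≤ (L:ℝ) * ε := mul_le_mul_of_nonneg_right h1 (le_of_lt hε)
      _ = ε * L := by ring
  set A : ℕ := Nr with hA
  set m : ℕ := p * (A + L) with hm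
  set δ : ℝ := 1 / (2 * m + 2) with hδ
  have hδ0 : 0 < δ := by rw [hδ]; positivity
  have hδ1 : δ < 1 := by
    rw [hδ]
    rw [div_lt_one (by positivity)]
    have : (0:ℝ) ≤ (m:ℝ) := Nat.cast_nonneg m
    linarith
  have hpow : (1:ℝ)/2 ≤ (1 - δ) ^ m := by
    have h1 : 1 + (m:ℝ) * (-δ) ≤ (1 + (-δ)) ^ m := by
      apply one_add_mul_le_pow
      linarith
    have h2 : (m:ℝ) * δ ≤ 1/2 := by
      rw [hδ, mul_one_div]
      have hm0 : (0:ℝ) ≤ (m:ℝ) := Nat.cast_nonneg m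
      rw [div_le_div_iff₀ (by linarith) (by norm_num)]
      linarith
    have h3 : (1 + (-δ)) ^ m = (1 - δ) ^ m := by ring_nf
    linarith
  obtain ⟨Ns, hNs⟩ := ratio_thresh hs hδ0
  refine ⟨p * N₁ + q * (Ns + m + 1), fun n hn i k hi hik => ?_⟩
  -- k is large
  have hklarge : Ns + m ≤ k := by
    have h1 : p * i ≤ p * N₁ := Nat.mul_le_mul (le_refl p) (by omega)
    have h2 : q * (Ns + m + 1) ≤ q * k := by omega
    have h3 := Nat.le_of_mul_le_mul_left h2 (by omega : 0 < q)
    omega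
  have hsplit : p * (A + L) = p * A + p * L := by ring
  have hpA : p * A ≤ k := by omega
  have hwin : p * i + p * (q * A) + q * (k - p * A) = n := by
    have h1 : q * (k - p * A) + q * (p * A) = q * k := by
      rw [← Nat.mul_add]; congr 1; omega
    have h2 : p * (q * A) = q * (p * A) := by ring
    omega
  -- window lower bound
  have hsum : ∑ Δ ∈ Finset.range L, r ((i + q * A) + q * Δ) * s ((k - p * A) - p * Δ) ≤
      cauchy (substPow p r) (substPow q s) n := by
    apply window_le hr0 hs0 hp hq L (by rw [← hwin]; ring_nf) (by omega)
    
  -- each window term is at least s k / 2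
  have hterm : ∀ Δ ∈ Finset.range L, (1/2 : ℝ) * s k ≤
      r ((i + q * A) + q * Δ) * s ((k - p * A) - p * Δ) := by
    intro Δ hΔ
    have hΔL : Δ < L := Finset.mem_range.mp hΔ
    have hr1 : (1:ℝ) ≤ r ((i + q * A) + q * Δ) := by
      apply hNr
      have : A ≤ q * A := Nat.le_mul_of_pos_left A (by omega)
      omega
    have hidx : (k - p * A) - p * Δ = k - p * (A + Δ) := by
      have : p * (A + Δ) = p * A + p * Δ := by ring
      omega
    have hmm : p * (A + Δ) ≤ m := by
      rw [hm]
      exact Nat.mul_le_mul (le_refl p) (by omega)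
    have hchain : (1 - δ) ^ (p * (A + Δ)) * s ((k - p * (A + Δ)) + p * (A + Δ)) ≤
        s (k - p * (A + Δ)) := by
      apply chain_lower hδ1 hNs
      omega
    have hback : (k - p * (A + Δ)) + p * (A + Δ) = k := by omega
    rw [hback] at hchain
    have hpowle : (1 - δ) ^ m ≤ (1 - δ) ^ (p * (A + Δ)) :=
      pow_le_pow_of_le_one (by linarith) (by linarith) hmm
    have hsk0 : 0 ≤ s k := hs0 k
    have h1 : (1/2 : ℝ) * s k ≤ (1 - δ) ^ (p * (A + Δ)) * s k := by
      apply mul_le_mul_of_nonneg_right _ hsk0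
      calc (1/2 : ℝ) ≤ (1 - δ) ^ m := hpow
        _ ≤ _ := hpowle
    have h2 : (1 - δ) ^ (p * (A + Δ)) * s k ≤ s (k - p * (A + Δ)) := hchain
    have h3 : s (k - p * (A + Δ)) ≤ r ((i + q * A) + q * Δ) * s (k - p * (A + Δ)) := by
      nlinarith [hs0 (k - p * (A + Δ))]
    rw [hidx]
    linarith
  have hLsum : (L : ℝ) * ((1/2 : ℝ) * s k) ≤ cauchy (substPow p r) (substPow q s) n := by
    calc (L : ℝ) * ((1/2 : ℝ) * s k)
        = ∑ _Δ ∈ Finset.range L, (1/2 : ℝ) * s k := by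
          rw [Finset.sum_const, Finset.card_range]
          push_cast
          ring
      _ ≤ ∑ Δ ∈ Finset.range L, r ((i + q * A) + q * Δ) * s ((k - p * A) - p * Δ) :=
          Finset.sum_le_sum hterm
      _ ≤ _ := hsum
  -- conclude
  have hsk0 : 0 ≤ s k := hs0 k
  have hL0 : (0:ℝ) < L := by exact_mod_cast hL1
  calc C * s k ≤ max C 0 * s k := mul_le_mul_of_nonneg_right (le_max_left C 0) hsk0
    _ ≤ (ε * L / 2) * s k := by
        apply mul_le_mul_of_nonneg_right _ hsk0
        linarith
    _ = ε * ((L:ℝ) * ((1/2:ℝ) * s k)) := by ring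
    _ ≤ ε * cauchy (substPow p r) (substPow q s) n := by
        apply mul_le_mul_of_nonneg_left hLsum (le_of_lt hε)

end RTNaux
namespace RTNaux

set_option maxHeartbeats 2000000 in
lemma step_bounds {r s : ℕ → ℝ} (hr : RTN1 r) (hs : RTN1 s)
    {p q : ℕ} (hp : 1 ≤ p) (hq : 1 ≤ q) (hpq : Nat.Coprime p q)
    {ε : ℝ} (hε0 : 0 < ε) (hε1 : ε ≤ 1/2) :
    ∀ᶠ n in atTop,
      (1 - ε) * cauchy (substPow p r) (substPow q s) (n + p) ≤
        cauchy (substPow p r) (substPow q s) n ∧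
      cauchy (substPow p r) (substPow q s) n ≤
        (1 + ε) * cauchy (substPow p r) (substPow q s) (n + p) := by
  have hr0 := isNat_nonneg hr.2
  have hs0 := isNat_nonneg hs.2
  set c := cauchy (substPow p r) (substPow q s) with hc
  set δ : ℝ := ε / 4 with hδ
  have hδ0 : 0 < δ := by rw [hδ]; linarith
  have hδ1 : δ ≤ 1/8 := by rw [hδ]; linarith
  obtain ⟨Nδ, hNδ⟩ := ratio_thresh hr hδ0
  set N : ℕ := Nδ + 1 with hN
  set B : ℝ := (∑ i ∈ Finset.range (N + 2), r i) + 1 with hB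
  have hBr : ∀ i, i < N + 2 → r i ≤ B := by
    intro i hi
    have h1 : r i ≤ ∑ i ∈ Finset.range (N + 2), r i :=
      Finset.single_le_sum (fun j _ => hr0 j) (Finset.mem_range.mpr hi)
    rw [hB]; linarith
  set PN : ℝ := ((p * N : ℕ) : ℝ) with hPN
  have hPN0 : (0:ℝ) ≤ PN := Nat.cast_nonneg _
  set ε₃ : ℝ := ε / (4 * (PN + 1)) with hε₃
  have hε₃0 : 0 < ε₃ := by rw [hε₃]; positivity
  have hkey : PN * ε₃ ≤ ε / 4 := by
    rw [hε₃, mul_div_assoc']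
    rw [div_le_div_iff₀ (by positivity) (by norm_num)]
    nlinarith
  have hε₃4 : ε₃ ≤ ε / 4 := by
    rw [hε₃]
    rw [div_le_div_iff₀ (by positivity) (by norm_num)]
    nlinarith
  obtain ⟨M₁, hM₁⟩ := boundary_small hr hs hp hq B (N + 1) hε₃0
  obtain ⟨M₂, hM₂⟩ := c_pos hr hs hp hq hpq
  rw [Filter.eventually_atTop]
  refine ⟨M₁ + M₂ + p * N, fun n hn => ?_⟩
  have hnM₁ : M₁ ≤ n := by omega
  have hnM₂ : M₂ ≤ n := by omega
  have hnpN : p * N ≤ n := by omega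
  have hc1 : 1 ≤ c n := hM₂ n hnM₂
  have hc1p : 1 ≤ c (n + p) := hM₂ (n + p) (by omega)
  -- boundary bound for terms with small r-index
  have hbd : ∀ (g : ℕ → ℝ), (∀ i, i < N + 1 → g i ≤ B) → (∀ i, 0 ≤ g i) →
      ∀ j, j < p * N → substPow p g j * substPow q s (n - j) ≤ ε₃ * c n := by
    intro g hg hg0 j hj
    by_cases hpj : p ∣ j
    · obtain ⟨i, rfl⟩ := hpj
      have hiN : i < N := by
        by_contra hcon
        push_neg at hcon
        have : p * N ≤ p * i := Nat.mul_le_mul (le_refl p) hcon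
        omega
      have hgval : substPow p g (p * i) = g i := by
        simp [substPow, Nat.mul_div_cancel_left _ hp]
      by_cases hqk : q ∣ (n - p * i)
      · obtain ⟨k, hk⟩ := hqk
        have hik : p * i + q * k = n := by omega
        have hsval : substPow q s (n - p * i) = s k := by
          rw [hk]
          simp [substPow, Nat.mul_div_cancel_left _ hq]
        rw [hgval, hsval]
        calc g i * s k ≤ B * s k :=
              mul_le_mul_of_nonneg_right (hg i (by omega)) (hs0 k)
          _ ≤ ε₃ * c n := hM₁ n hnM₁ i k (by omega) hik
      · have : substPow q s (n - p * i) = 0 := by simp [substPow, hqk]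
        rw [this, mul_zero]
        positivity
    · have : substPow p g j = 0 := by simp [substPow, hpj]
      rw [this, zero_mul]
      positivity
  -- decomposition of c (n + p)
  have hdec : c (n + p) = r 0 * substPow q s (n + p) +
      cauchy (substPow p (fun i => r (i + 1))) (substPow q s) n := by
    rw [hc]
    have h1 := shift_decomp (a := substPow p r) (b := substPow q s) hp
      (fun j hj => by simp [substPow, hj]) n
    rw [h1, substPow_shift hp]
    congr 2
    simp [substPow]
  -- the two split sums
  have hsz : n + 1 = p * N + (n + 1 - p * N) := by omega
  have hcsplit : ∀ (g : ℕ → ℝ),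
      cauchy (substPow p g) (substPow q s) n =
        ∑ j ∈ Finset.range (p * N), substPow p g j * substPow q s (n - j) +
        ∑ x ∈ Finset.range (n + 1 - p * N),
          substPow p g (p * N + x) * substPow q s (n - (p * N + x)) := by
    intro g
    show (∑ j ∈ Finset.range (n + 1), substPow p g j * substPow q s (n - j)) = _
    conv_lhs => rw [hsz]
    rw [Finset.sum_range_add]
  -- termwise comparisons in the bulk
  have hbulk_up : ∀ x : ℕ,
      substPow p r (p * N + x) * substPow q s (n - (p * N + x)) ≤
      (1 + δ) * (substPow p (fun i => r (i + 1)) (p * N + x) *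
        substPow q s (n - (p * N + x))) := by
    intro x
    set j := p * N + x with hj
    by_cases hpj : p ∣ j
    · have hiN : Nδ ≤ j / p := by
        have h1 : N ≤ j / p := (Nat.le_div_iff_mul_le (by omega)).mpr
          (by rw [Nat.mul_comm N p]; omega)
        omega
      have h2 := (hNδ (j / p) hiN).2.2
      have hgval : substPow p r j = r (j / p) := by simp [substPow, hpj]
      have hgval' : substPow p (fun i => r (i + 1)) j = r (j / p + 1) := by
        simp [substPow, hpj]
      rw [hgval, hgval', ← mul_assoc]
      exact mul_le_mul_of_nonneg_right h2 (substPow_nonneg hs0 q _)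
    · simp [substPow, hpj]
  have hbulk_dn : ∀ x : ℕ,
      (1 - δ) * (substPow p (fun i => r (i + 1)) (p * N + x) *
        substPow q s (n - (p * N + x))) ≤
      substPow p r (p * N + x) * substPow q s (n - (p * N + x)) := by
    intro x
    set j := p * N + x with hj
    by_cases hpj : p ∣ j
    · have hiN : Nδ ≤ j / p := by
        have h1 : N ≤ j / p := (Nat.le_div_iff_mul_le (by omega)).mpr
          (by rw [Nat.mul_comm N p]; omega)
        omega
      have h2 := (hNδ (j / p) hiN).2.1
      have hgval : substPow p r j = r (j / p) := by simp [substPow, hpj]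
      have hgval' : substPow p (fun i => r (i + 1)) j = r (j / p + 1) := by
        simp [substPow, hpj]
      rw [hgval, hgval', ← mul_assoc]
      exact mul_le_mul_of_nonneg_right h2 (substPow_nonneg hs0 q _)
    · simp [substPow, hpj]
  -- small-index sums
  have hS1 : ∑ j ∈ Finset.range (p * N), substPow p r j * substPow q s (n - j) ≤
      PN * (ε₃ * c n) := by
    calc ∑ j ∈ Finset.range (p * N), substPow p r j * substPow q s (n - j)
        ≤ ∑ _j ∈ Finset.range (p * N), ε₃ * c n :=
          Finset.sum_le_sum fun j hj =>
            hbd r (fun i hi => hBr i (by omega)) hr0 j (Finset.mem_range.mp hj)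
      _ = PN * (ε₃ * c n) := by
          rw [Finset.sum_const, Finset.card_range, nsmul_eq_mul, hPN]
  have hS1' : ∑ j ∈ Finset.range (p * N),
      substPow p (fun i => r (i + 1)) j * substPow q s (n - j) ≤ PN * (ε₃ * c n) := by
    calc ∑ j ∈ Finset.range (p * N), substPow p (fun i => r (i + 1)) j * substPow q s (n - j)
        ≤ ∑ _j ∈ Finset.range (p * N), ε₃ * c n :=
          Finset.sum_le_sum fun j hj =>
            hbd (fun i => r (i + 1)) (fun i hi => hBr (i + 1) (by omega))
              (fun i => hr0 (i + 1)) j (Finset.mem_range.mp hj)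
      _ = PN * (ε₃ * c n) := by
          rw [Finset.sum_const, Finset.card_range, nsmul_eq_mul, hPN]
  -- boundary term of the decomposition
  have he : r 0 * substPow q s (n + p) ≤ ε₃ * c (n + p) := by
    by_cases hqk : q ∣ (n + p)
    · obtain ⟨k, hk⟩ := hqk
      have hsval : substPow q s (n + p) = s k := by
        rw [hk]; simp [substPow, Nat.mul_div_cancel_left _ hq]
      rw [hsval]
      calc r 0 * s k ≤ B * s k := mul_le_mul_of_nonneg_right (hBr 0 (by omega)) (hs0 k)
        _ ≤ ε₃ * c (n + p) := hM₁ (n + p) (by omega) 0 k (by omega) (by omega)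
    · have : substPow q s (n + p) = 0 := by simp [substPow, hqk]
      rw [this, mul_zero]
      positivity
  -- nonnegativity of the various sums
  have hS1nn : 0 ≤ ∑ j ∈ Finset.range (p * N), substPow p r j * substPow q s (n - j) :=
    Finset.sum_nonneg fun j _ => mul_nonneg (substPow_nonneg hr0 p j) (substPow_nonneg hs0 q _)
  have hS1nn' : 0 ≤ ∑ j ∈ Finset.range (p * N),
      substPow p (fun i => r (i + 1)) j * substPow q s (n - j) :=
    Finset.sum_nonneg fun j _ => mul_nonneg
      (substPow_nonneg (fun i => hr0 (i + 1)) p j) (substPow_nonneg hs0 q _)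
  have hS2nn' : 0 ≤ ∑ x ∈ Finset.range (n + 1 - p * N),
      substPow p (fun i => r (i + 1)) (p * N + x) * substPow q s (n - (p * N + x)) :=
    Finset.sum_nonneg fun x _ => mul_nonneg
      (substPow_nonneg (fun i => hr0 (i + 1)) p _) (substPow_nonneg hs0 q _)
  -- abbreviations
  set S1 := ∑ j ∈ Finset.range (p * N), substPow p r j * substPow q s (n - j) with hS1d
  set S2 := ∑ x ∈ Finset.range (n + 1 - p * N),
      substPow p r (p * N + x) * substPow q s (n - (p * N + x)) with hS2d
  set T1 := ∑ j ∈ Finset.range (p * N),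
      substPow p (fun i => r (i + 1)) j * substPow q s (n - j) with hT1d
  set T2 := ∑ x ∈ Finset.range (n + 1 - p * N),
      substPow p (fun i => r (i + 1)) (p * N + x) * substPow q s (n - (p * N + x)) with hT2d
  have hcn : c n = S1 + S2 := hcsplit r
  have hcn' : cauchy (substPow p (fun i => r (i + 1))) (substPow q s) n = T1 + T2 :=
    hcsplit (fun i => r (i + 1))
  have hS2T2 : S2 ≤ (1 + δ) * T2 := by
    rw [hS2d, hT2d, Finset.mul_sum]
    exact Finset.sum_le_sum fun x _ => hbulk_up x
  have hT2S2 : (1 - δ) * T2 ≤ S2 := by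
    rw [hS2d, hT2d, Finset.mul_sum]
    exact Finset.sum_le_sum fun x _ => hbulk_dn x
  -- upper bound : c n ≤ (1 + ε) * c (n + p)
  have hcn0 : (0:ℝ) ≤ c n := by linarith
  have hcnp0 : (0:ℝ) ≤ c (n + p) := by linarith
  have h5 : PN * (ε₃ * c n) ≤ (ε/4) * c n := by
    calc PN * (ε₃ * c n) = (PN * ε₃) * c n := by ring
      _ ≤ (ε/4) * c n := mul_le_mul_of_nonneg_right hkey hcn0
  have h7 : ε₃ * c (n + p) ≤ (ε/4) * c (n + p) :=
    mul_le_mul_of_nonneg_right hε₃4 hcnp0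
  have hup : c n ≤ (1 + ε) * c (n + p) := by
    have h1 : c n ≤ PN * (ε₃ * c n) + (1 + δ) * T2 := by
      linarith [hcn, hS1, hS2T2]
    have h2 : T2 ≤ c (n + p) := by
      have h0 : 0 ≤ r 0 * substPow q s (n + p) :=
        mul_nonneg (hr0 0) (substPow_nonneg hs0 q _)
      linarith [hdec, hcn', hS1nn']
    have h4 : c n ≤ (ε/4) * c n + (1 + δ) * c (n + p) := by
      have h8 : (1 + δ) * T2 ≤ (1 + δ) * c (n + p) :=
        mul_le_mul_of_nonneg_left h2 (by linarith)
      linarith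
    rw [hδ] at h4
    have h9 : (1 - ε/4) * c n ≤ (1 + ε/4) * c (n + p) := by linarith
    have hcoef : (1 + ε/4) ≤ (1 + ε) * (1 - ε/4) := by nlinarith
    have h10 : (1 + ε/4) * c (n + p) ≤ ((1 + ε) * (1 - ε/4)) * c (n + p) :=
      mul_le_mul_of_nonneg_right hcoef hcnp0
    have h11 : (1 - ε/4) * c n ≤ (1 - ε/4) * ((1 + ε) * c (n + p)) := by
      calc (1 - ε/4) * c n ≤ ((1 + ε) * (1 - ε/4)) * c (n + p) := le_trans h9 h10
        _ = (1 - ε/4) * ((1 + ε) * c (n + p)) := by ring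
    exact le_of_mul_le_mul_left h11 (by linarith)
  -- lower bound : (1 - ε) * c (n + p) ≤ c n
  have hdn : (1 - ε) * c (n + p) ≤ c n := by
    have h1 : c (n + p) ≤ ε₃ * c (n + p) + PN * (ε₃ * c n) + T2 := by
      linarith [hdec, hcn', he, hS1']
    have h2 : (1 - δ) * T2 ≤ c n := by
      linarith [hcn, hT2S2, hS1nn]
    have hd : (0:ℝ) ≤ 1 - δ := by linarith
    have h3 := mul_le_mul_of_nonneg_left h1 hd
    rw [mul_add, mul_add] at h3
    have h4 : (1 - δ) * c (n + p) ≤ (1 - δ) * (ε₃ * c (n + p)) +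
        (1 - δ) * (PN * (ε₃ * c n)) + c n := by linarith
    have hE1 : (1 - δ) * (ε₃ * c (n + p)) ≤ (ε/4) * c (n + p) := by
      have hnn : 0 ≤ ε₃ * c (n + p) := mul_nonneg (le_of_lt hε₃0) hcnp0
      calc (1 - δ) * (ε₃ * c (n + p)) ≤ 1 * (ε₃ * c (n + p)) :=
            mul_le_mul_of_nonneg_right (by linarith) hnn
        _ = ε₃ * c (n + p) := by ring
        _ ≤ (ε/4) * c (n + p) := h7
    have hE2 : (1 - δ) * (PN * (ε₃ * c n)) ≤ (ε/4) * c n := by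
      have hnn : 0 ≤ PN * (ε₃ * c n) :=
        mul_nonneg hPN0 (mul_nonneg (le_of_lt hε₃0) hcn0)
      calc (1 - δ) * (PN * (ε₃ * c n)) ≤ 1 * (PN * (ε₃ * c n)) :=
            mul_le_mul_of_nonneg_right (by linarith) hnn
        _ = PN * (ε₃ * c n) := by ring
        _ ≤ (ε/4) * c n := h5
    rw [hδ] at h4 hE1 hE2
    have h9 : (1 - ε/2) * c (n + p) ≤ (1 + ε/4) * c n := by linarith
    have hcoef2 : (1 - ε) * (1 + ε/4) ≤ (1 - ε/2) := by nlinarith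
    have h10 : ((1 - ε) * (1 + ε/4)) * c (n + p) ≤ (1 - ε/2) * c (n + p) :=
      mul_le_mul_of_nonneg_right hcoef2 hcnp0
    have h11 : (1 + ε/4) * ((1 - ε) * c (n + p)) ≤ (1 + ε/4) * c n := by
      calc (1 + ε/4) * ((1 - ε) * c (n + p)) = ((1 - ε) * (1 + ε/4)) * c (n + p) := by ring
        _ ≤ (1 - ε/2) * c (n + p) := h10
        _ ≤ (1 + ε/4) * c n := h9
    exact le_of_mul_le_mul_left h11 (by linarith)
  exact ⟨hdn, hup⟩

end RTNaux
namespace RTNaux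

lemma step_tendsto {r s : ℕ → ℝ} (hr : RTN1 r) (hs : RTN1 s)
    {p q : ℕ} (hp : 1 ≤ p) (hq : 1 ≤ q) (hpq : Nat.Coprime p q) :
    Filter.Tendsto (fun n => cauchy (substPow p r) (substPow q s) n /
      cauchy (substPow p r) (substPow q s) (n + p)) atTop (nhds 1) := by
  rw [Metric.tendsto_atTop]
  intro ε hε
  set ε' : ℝ := min (ε/2) (1/2) with hε'
  have hε'0 : 0 < ε' := by
    rw [hε']; apply lt_min (by linarith) (by norm_num)
  have hε'2 : ε' ≤ 1/2 := min_le_right _ _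
  have hε'ε : ε' < ε := lt_of_le_of_lt (min_le_left _ _) (by linarith)
  obtain ⟨M, hM⟩ := Filter.eventually_atTop.mp (step_bounds hr hs hp hq hpq hε'0 hε'2)
  obtain ⟨M₂, hM₂⟩ := c_pos hr hs hp hq hpq
  refine ⟨max M M₂, fun n hn => ?_⟩
  obtain ⟨hdn, hup⟩ := hM n (le_trans (le_max_left _ _) hn)
  have hpos : (0:ℝ) < cauchy (substPow p r) (substPow q s) (n + p) :=
    lt_of_lt_of_le one_pos (hM₂ (n + p) (by omega))
  rw [Real.dist_eq]
  have h1 : cauchy (substPow p r) (substPow q s) n /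
      cauchy (substPow p r) (substPow q s) (n + p) ≤ 1 + ε' := by
    rw [div_le_iff₀ hpos]; linarith
  have h2 : 1 - ε' ≤ cauchy (substPow p r) (substPow q s) n /
      cauchy (substPow p r) (substPow q s) (n + p) := by
    rw [le_div_iff₀ hpos]; linarith
  rw [abs_lt]
  constructor <;> linarith

lemma tendsto_iterate {c : ℕ → ℝ} {M : ℕ} (hM : ∀ n, M ≤ n → 1 ≤ c n) {h : ℕ}
    (hstep : Filter.Tendsto (fun n => c n / c (n + h)) atTop (nhds 1)) (u : ℕ) :
    Filter.Tendsto (fun n => c n / c (n + h * u)) atTop (nhds 1) := by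
  induction u with
  | zero =>
    apply Filter.Tendsto.congr' _ tendsto_const_nhds
    filter_upwards [Filter.eventually_ge_atTop M] with n hn
    have h1 : 1 ≤ c n := hM n hn
    rw [Nat.mul_zero, Nat.add_zero]
    exact (div_self (by linarith)).symm
  | succ u ih =>
    have hcomp : Filter.Tendsto (fun n => c (n + h * u) / c ((n + h * u) + h))
        atTop (nhds 1) := hstep.comp (Filter.tendsto_add_atTop_nat (h * u))
    have hmul := ih.mul hcomp
    rw [mul_one] at hmul
    apply Filter.Tendsto.congr' _ hmul
    filter_upwards [Filter.eventually_ge_atTop M] with n hn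
    have h1 : (0:ℝ) < c (n + h * u) := lt_of_lt_of_le one_pos (hM _ (by omega))
    have hidx : n + h * u + h = n + h * (u + 1) := by ring
    rw [div_mul_div_comm, hidx]
    rw [show c n * c (n + h * u) = c (n + h * u) * c n by ring,
        show c (n + h * u) * c (n + h * (u + 1)) = c (n + h * u) * c (n + h * (u + 1)) from rfl]
    rw [mul_div_mul_left _ _ (ne_of_gt h1)]

lemma ratio_tendsto {c : ℕ → ℝ} {M : ℕ} (hM : ∀ n, M ≤ n → 1 ≤ c n)
    {p q u v : ℕ} (hpu : p * u = q * v + 1)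
    (hsp : Filter.Tendsto (fun n => c n / c (n + p)) atTop (nhds 1))
    (hsq : Filter.Tendsto (fun n => c n / c (n + q)) atTop (nhds 1)) :
    Filter.Tendsto (fun n => c (n - 1) / c n) atTop (nhds 1) := by
  have hpu' := tendsto_iterate hM hsp u
  have hqv' := tendsto_iterate hM hsq v
  have hqv1 : Filter.Tendsto (fun n => c (n + 1) / c ((n + 1) + q * v)) atTop (nhds 1) :=
    hqv'.comp (Filter.tendsto_add_atTop_nat 1)
  have hdiv := hpu'.div hqv1 one_ne_zero
  rw [div_one] at hdiv
  have hF1 : Filter.Tendsto (fun n => c n / c (n + 1)) atTop (nhds 1) := by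
    apply Filter.Tendsto.congr' _ hdiv
    filter_upwards [Filter.eventually_ge_atTop M] with n hn
    have hx : (0:ℝ) < c (n + p * u) := lt_of_lt_of_le one_pos (hM _ (by omega))
    have hidx : n + 1 + q * v = n + p * u := by omega
    simp only [Pi.div_apply]
    rw [hidx, div_div_div_comm, div_self (ne_of_gt hx), div_one]
  have hcompsub := hF1.comp (Filter.tendsto_sub_atTop_nat 1)
  apply Filter.Tendsto.congr' _ hcompsub
  filter_upwards [Filter.eventually_ge_atTop 1] with n hn
  show c (n - 1) / c ((n - 1) + 1) = c (n - 1) / c n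
  congr 2
  omega

end RTNaux
namespace RTNaux

lemma RTN1_cauchy_core {r s : ℕ → ℝ} (hr : RTN1 r) (hs : RTN1 s) {p q : ℕ}
    (hp : 1 ≤ p) (hq : 1 ≤ q) (hpq : Nat.Coprime p q) :
    RTN1 (cauchy (substPow p r) (substPow q s)) := by
  obtain ⟨M, hM⟩ := c_pos hr hs hp hq hpq
  have hstep_p := step_tendsto hr hs hp hq hpq
  have hstep_q : Filter.Tendsto (fun n => cauchy (substPow p r) (substPow q s) n /
      cauchy (substPow p r) (substPow q s) (n + q)) atTop (nhds 1) := by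
    have hcomm : cauchy (substPow q s) (substPow p r) =
        cauchy (substPow p r) (substPow q s) := cauchy_comm _ _
    have h := step_tendsto hs hr hq hp (Nat.Coprime.symm hpq)
    rw [hcomm] at h
    exact h
  obtain ⟨u, v, huv⟩ := bezout_nat hp hq hpq
  have hratio := ratio_tendsto hM huv hstep_p hstep_q
  refine ⟨⟨?_, hratio⟩, isNat_cauchy (isNat_substPow hr.2 p) (isNat_substPow hs.2 q)⟩
  rw [Filter.eventually_atTop]
  exact ⟨M, fun n hn => lt_of_lt_of_le one_pos (hM n hn)⟩

lemma RTN1star_cauchy {a b : ℕ → ℝ} (ha : RTN1star a) (hb : RTN1star b) :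
    RTN1star (cauchy a b) := by
  obtain ⟨d₁, hd₁, r, hrr, rfl⟩ := ha
  obtain ⟨d₂, hd₂, s, hss, rfl⟩ := hb
  set g := Nat.gcd d₁ d₂ with hg
  have hgpos : 1 ≤ g := Nat.gcd_pos_of_pos_left d₂ (by omega)
  set p := d₁ / g with hpdef
  set q := d₂ / g with hqdef
  have hp : 1 ≤ p := Nat.div_pos (Nat.le_of_dvd (by omega) (Nat.gcd_dvd_left d₁ d₂)) (by omega)
  have hq : 1 ≤ q := Nat.div_pos (Nat.le_of_dvd (by omega) (Nat.gcd_dvd_right d₁ d₂)) (by omega)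
  have hpq : Nat.Coprime p q := Nat.coprime_div_gcd_div_gcd (by omega)
  have hgp : g * p = d₁ := Nat.mul_div_cancel' (Nat.gcd_dvd_left d₁ d₂)
  have hgq : g * q = d₂ := Nat.mul_div_cancel' (Nat.gcd_dvd_right d₁ d₂)
  have ha' : substPow d₁ r = substPow g (substPow p r) := by
    rw [substPow_substPow r hgpos hp, hgp]
  have hb' : substPow d₂ s = substPow g (substPow q s) := by
    rw [substPow_substPow s hgpos hq, hgq]
  refine ⟨g, hgpos, cauchy (substPow p r) (substPow q s),
    RTN1_cauchy_core hrr hss hp hq hpq, ?_⟩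
  rw [ha', hb', cauchy_substPow hgpos]

end RTNaux

/-- `RTN1*` is closed under multiplication by positive integers and Cauchy product. -/
theorem RTN1star_closure (a b : ℕ → ℝ) (ha : RTN1star a) (hb : RTN1star b)
    (k : ℕ) (hk : 1 ≤ k) :
    RTN1star (fun n => (k : ℝ) * a n) ∧ RTN1star (cauchy a b) := by
  constructor
  · obtain ⟨d, hd, r, hrr, rfl⟩ := ha
    exact ⟨d, hd, fun n => (k : ℝ) * r n, RTNaux.RTN1_smul hrr hk,
      RTNaux.smul_substPow (k : ℝ) d r⟩
  · exact RTNaux.RTN1star_cauchy ha hb
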